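/- Let s(x) = c · x₁^{p₁} ⋯ x_N^{p_N} on the positive orthant with c > 0. If one exponent p_k is positive, all other exponents p_i (i ≠ k) are negative, and ∑_{i=1}^N p_i ≥ 1, then s is convex. -/

import Mathlib

open Finset Real



/-- Mahler's inequality: superadditivity of the weighted geometric mean. -/
lemma mahler_ineq {ι : Type*} (s : Finset ι) (w A B : ι → ℝ)
    (hw : ∀ i ∈ s, 0 ≤ w i) (hw1 : ∑ i ∈ s, w i = 1)
    (hA : ∀ i ∈ s, 0 < A i) (hB : ∀ i ∈ s, 0 < B i) :
    ∏ i ∈ s, A i ^ w i + ∏ i ∈ s, B i ^ w i ≤ ∏ i ∈ s, (A i + B i) ^ w i := by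
  have hAB : ∀ i ∈ s, 0 < A i + B i := fun i hi => add_pos (hA i hi) (hB i hi)
  have hP : 0 < ∏ i ∈ s, (A i + B i) ^ w i :=
    Finset.prod_pos fun i hi => Real.rpow_pos_of_pos (hAB i hi) _
  have h1 : ∏ i ∈ s, (A i / (A i + B i)) ^ w i ≤ ∑ i ∈ s, w i * (A i / (A i + B i)) :=
    Real.geom_mean_le_arith_mean_weighted s w _ hw hw1
      (fun i hi => div_nonneg (hA i hi).le (hAB i hi).le)
  have h2 : ∏ i ∈ s, (B i / (A i + B i)) ^ w i ≤ ∑ i ∈ s, w i * (B i / (A i + B i)) :=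
    Real.geom_mean_le_arith_mean_weighted s w _ hw hw1
      (fun i hi => div_nonneg (hB i hi).le (hAB i hi).le)
  have e1 : ∏ i ∈ s, (A i / (A i + B i)) ^ w i
      = (∏ i ∈ s, A i ^ w i) / ∏ i ∈ s, (A i + B i) ^ w i := by
    rw [← Finset.prod_div_distrib]
    exact Finset.prod_congr rfl fun i hi => Real.div_rpow (hA i hi).le (hAB i hi).le _
  have e2 : ∏ i ∈ s, (B i / (A i + B i)) ^ w i
      = (∏ i ∈ s, B i ^ w i) / ∏ i ∈ s, (A i + B i) ^ w i := by
    rw [← Finset.prod_div_distrib]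
    exact Finset.prod_congr rfl fun i hi => Real.div_rpow (hB i hi).le (hAB i hi).le _
  have e3 : ∑ i ∈ s, w i * (A i / (A i + B i)) + ∑ i ∈ s, w i * (B i / (A i + B i)) = 1 := by
    rw [← Finset.sum_add_distrib, ← hw1]
    refine Finset.sum_congr rfl fun i hi => ?_
    have := (hAB i hi).ne'
    field_simp
  rw [e1] at h1; rw [e2] at h2
  have h4 := add_le_add h1 h2
  rw [← add_div, e3] at h4
  calc ∏ i ∈ s, A i ^ w i + ∏ i ∈ s, B i ^ w i
      = ((∏ i ∈ s, A i ^ w i + ∏ i ∈ s, B i ^ w i) / ∏ i ∈ s, (A i + B i) ^ w i)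
        * ∏ i ∈ s, (A i + B i) ^ w i := by field_simp
    _ ≤ 1 * ∏ i ∈ s, (A i + B i) ^ w i := by
        exact mul_le_mul_of_nonneg_right h4 hP.le
    _ = ∏ i ∈ s, (A i + B i) ^ w i := one_mul _


lemma gm_eq {N : ℕ} (p : Fin N → ℝ) (k : Fin N) (Q' : ℝ)
    (hQ' : Q' = 1 + ∑ i ∈ Finset.univ.erase k, -p i) (hQ'pos : 0 < Q')
    (t : ℝ) (ht : 0 < t) (u : Fin N → ℝ) (hu : ∀ i, 0 < u i) :
    ∏ i, (if i = k then t * ∏ j, u j ^ p j else t * u i) ^ ((if i = k then (1:ℝ) else -p i) / Q')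
      = t * u k ^ (p k / Q') := by
  classical
  have hFu : 0 < ∏ j, u j ^ p j :=
    Finset.prod_pos fun j _ => Real.rpow_pos_of_pos (hu j) _
  have hsum_erase : ∑ i ∈ Finset.univ.erase k, -p i / Q' = (Q' - 1) / Q' := by
    rw [← Finset.sum_div]
    congr 1
    rw [hQ']; ring
  have e0 : ∏ i, (if i = k then t * ∏ j, u j ^ p j else t * u i) ^ ((if i = k then (1:ℝ) else -p i) / Q')
      = (t * ∏ j, u j ^ p j) ^ (1 / Q') * ∏ i ∈ Finset.univ.erase k, (t * u i) ^ (-p i / Q') := by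
    rw [← Finset.mul_prod_erase Finset.univ _ (Finset.mem_univ k)]
    rw [if_pos rfl, if_pos rfl]
    congr 1
    exact Finset.prod_congr rfl fun i hi => by
      rw [if_neg (Finset.mem_erase.1 hi).1, if_neg (Finset.mem_erase.1 hi).1]
  have e1 : (t * ∏ j, u j ^ p j) ^ (1 / Q') = t ^ (1 / Q') * (∏ j, u j ^ p j) ^ (1 / Q') :=
    Real.mul_rpow ht.le hFu.le
  have e2 : ∏ i ∈ Finset.univ.erase k, (t * u i) ^ (-p i / Q')
      = t ^ ((Q' - 1) / Q') * ∏ i ∈ Finset.univ.erase k, u i ^ (-p i / Q') := by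
    calc ∏ i ∈ Finset.univ.erase k, (t * u i) ^ (-p i / Q')
        = ∏ i ∈ Finset.univ.erase k, (t ^ (-p i / Q') * u i ^ (-p i / Q')) :=
          Finset.prod_congr rfl fun i _ => Real.mul_rpow ht.le (hu i).le
      _ = (∏ i ∈ Finset.univ.erase k, t ^ (-p i / Q')) * ∏ i ∈ Finset.univ.erase k, u i ^ (-p i / Q') :=
          Finset.prod_mul_distrib
      _ = t ^ ((Q' - 1) / Q') * ∏ i ∈ Finset.univ.erase k, u i ^ (-p i / Q') := by
          rw [← Real.rpow_sum_of_pos ht, hsum_erase]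
  have e3 : (∏ j, u j ^ p j) ^ (1 / Q')
      = u k ^ (p k / Q') * ∏ i ∈ Finset.univ.erase k, u i ^ (p i / Q') := by
    rw [← Real.finset_prod_rpow _ _ (fun j _ => (Real.rpow_pos_of_pos (hu j) _).le)]
    rw [← Finset.mul_prod_erase Finset.univ _ (Finset.mem_univ k)]
    congr 1
    · rw [← Real.rpow_mul (hu k).le, mul_one_div]
    · exact Finset.prod_congr rfl fun i _ => by rw [← Real.rpow_mul (hu i).le, mul_one_div]
  have e4 : (∏ i ∈ Finset.univ.erase k, u i ^ (p i / Q'))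
      * ∏ i ∈ Finset.univ.erase k, u i ^ (-p i / Q') = 1 := by
    rw [← Finset.prod_mul_distrib]
    refine Finset.prod_eq_one fun i _ => ?_
    rw [← Real.rpow_add (hu i), show p i / Q' + -p i / Q' = 0 by ring, Real.rpow_zero]
  have e5 : t ^ (1 / Q') * t ^ ((Q' - 1) / Q') = t := by
    rw [← Real.rpow_add ht]
    rw [show 1 / Q' + (Q' - 1) / Q' = 1 by field_simp; ring]
    exact Real.rpow_one t
  rw [e0, e1, e2, e3]
  rw [show t ^ (1 / Q') * (u k ^ (p k / Q') * ∏ i ∈ Finset.univ.erase k, u i ^ (p i / Q'))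
      * (t ^ ((Q' - 1) / Q') * ∏ i ∈ Finset.univ.erase k, u i ^ (-p i / Q'))
      = (t ^ (1 / Q') * t ^ ((Q' - 1) / Q')) * ((u k ^ (p k / Q'))
        * ((∏ i ∈ Finset.univ.erase k, u i ^ (p i / Q'))
          * ∏ i ∈ Finset.univ.erase k, u i ^ (-p i / Q'))) from by ring, e4, e5, mul_one]


theorem positive_signomial_term_convex_one_pos_exponent {N : ℕ} (c : ℝ) (p : Fin N → ℝ)
    (k : Fin N) (hc : 0 < c) (hk : 0 < p k) (hp : ∀ i, i ≠ k → p i < 0)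
    (hsum : 1 ≤ ∑ i, p i) :
    ConvexOn ℝ {x : Fin N → ℝ | ∀ i, 0 < x i}
      (fun x => c * ∏ i, x i ^ p i) := by
  classical
  constructor
  · -- the positive orthant is convex
    intro x hx y hy a b ha hb hab
    intro i
    simp only [Pi.add_apply, Pi.smul_apply, smul_eq_mul]
    rcases eq_or_lt_of_le ha with ha0 | ha0
    · have hb1 : b = 1 := by linarith
      rw [← ha0, hb1]; simpa using hy i
    · have h1 : 0 < a * x i := mul_pos ha0 (hx i)
      have h2 : 0 ≤ b * y i := mul_nonneg hb (hy i).le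
      linarith
  · intro x hx y hy a b ha hb hab
    simp only [Set.mem_setOf_eq] at hx hy
    simp only [Pi.add_apply, Pi.smul_apply, smul_eq_mul]
    rcases eq_or_lt_of_le ha with ha0 | ha0
    · have hb1 : b = 1 := by linarith
      rw [← ha0, hb1]; simp
    rcases eq_or_lt_of_le hb with hb0 | hb0
    · have ha1 : a = 1 := by linarith
      rw [← hb0, ha1]; simp
    -- main case: 0 < a, 0 < b
    set Q' : ℝ := 1 + ∑ i ∈ Finset.univ.erase k, -p i with hQ'
    have hQ'pos : 0 < Q' := by
      have : (0:ℝ) ≤ ∑ i ∈ Finset.univ.erase k, -p i :=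
        Finset.sum_nonneg fun i hi => by
          have := hp i (Finset.mem_erase.1 hi).1; linarith
      rw [hQ']; linarith
    have hsplit : ∑ i, p i = p k + ∑ i ∈ Finset.univ.erase k, p i :=
      (Finset.add_sum_erase _ _ (Finset.mem_univ k)).symm
    have hneg : ∑ i ∈ Finset.univ.erase k, -p i = -∑ i ∈ Finset.univ.erase k, p i := by
      simp
    have hpk : Q' ≤ p k := by rw [hQ', hneg]; linarith
    set m : ℝ := p k / Q' with hm_def
    have hm : 1 ≤ m := (one_le_div hQ'pos).2 hpk
    set F : (Fin N → ℝ) → ℝ := fun u => ∏ i, u i ^ p i with hF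
    have hFpos : ∀ u : Fin N → ℝ, (∀ i, 0 < u i) → 0 < F u := fun u hu =>
      Finset.prod_pos fun i _ => Real.rpow_pos_of_pos (hu i) _
    set z : Fin N → ℝ := fun i => a * x i + b * y i with hz_def
    have hz : ∀ i, 0 < z i := fun i =>
      add_pos (mul_pos ha0 (hx i)) (mul_pos hb0 (hy i))
    set w : Fin N → ℝ := fun i => (if i = k then (1:ℝ) else -p i) / Q' with hw_def
    have hwnn : ∀ i ∈ Finset.univ, 0 ≤ w i := by
      intro i _
      simp only [hw_def]
      rcases eq_or_ne i k with h | h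
      · rw [if_pos h]; positivity
      · rw [if_neg h]
        have := hp i h
        have : (0:ℝ) ≤ -p i := by linarith
        positivity
    have hw1 : ∑ i, w i = 1 := by
      simp only [hw_def]
      rw [← Finset.sum_div]
      rw [div_eq_one_iff_eq hQ'pos.ne']
      rw [← Finset.add_sum_erase _ _ (Finset.mem_univ k), if_pos rfl, hQ']
      congr 1
      exact Finset.sum_congr rfl fun i hi => by rw [if_neg (Finset.mem_erase.1 hi).1]
    set A : Fin N → ℝ := fun i => if i = k then a * F x else a * x i with hA_def
    set B : Fin N → ℝ := fun i => if i = k then b * F y else b * y i with hB_def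
    have hApos : ∀ i ∈ Finset.univ, 0 < A i := fun i _ => by
      simp only [hA_def]
      rcases eq_or_ne i k with h | h
      · rw [if_pos h]; exact mul_pos ha0 (hFpos x hx)
      · rw [if_neg h]; exact mul_pos ha0 (hx i)
    have hBpos : ∀ i ∈ Finset.univ, 0 < B i := fun i _ => by
      simp only [hB_def]
      rcases eq_or_ne i k with h | h
      · rw [if_pos h]; exact mul_pos hb0 (hFpos y hy)
      · rw [if_neg h]; exact mul_pos hb0 (hy i)
    have hmahler := mahler_ineq Finset.univ w A B hwnn hw1 hApos hBpos
    have egmA : ∏ i, A i ^ w i = a * x k ^ m := gm_eq p k Q' hQ' hQ'pos a ha0 x hx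
    have egmB : ∏ i, B i ^ w i = b * y k ^ m := gm_eq p k Q' hQ' hQ'pos b hb0 y hy
    have eAB : ∏ i, (A i + B i) ^ w i
        = (a * F x + b * F y) ^ (1 / Q') * ∏ i ∈ Finset.univ.erase k, z i ^ (-p i / Q') := by
      rw [← Finset.mul_prod_erase Finset.univ _ (Finset.mem_univ k)]
      congr 1
      · rw [hA_def, hB_def, hw_def]; simp
      · refine Finset.prod_congr rfl fun i hi => ?_
        have hik := (Finset.mem_erase.1 hi).1
        simp only [hA_def, hB_def, hw_def, if_neg hik]
        rfl
    rw [egmA, egmB, eAB] at hmahler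
    -- convexity of t ↦ t^m on [0,∞)
    have hconv : (a * x k + b * y k) ^ m ≤ a * x k ^ m + b * y k ^ m := by
      have := (convexOn_rpow hm).2 (Set.mem_Ici.2 (hx k).le) (Set.mem_Ici.2 (hy k).le)
        ha hb hab
      simpa [smul_eq_mul] using this
    have hzk : z k ^ m ≤ (a * F x + b * F y) ^ (1 / Q')
        * ∏ i ∈ Finset.univ.erase k, z i ^ (-p i / Q') := by
      calc z k ^ m = (a * x k + b * y k) ^ m := rfl
        _ ≤ a * x k ^ m + b * y k ^ m := hconv
        _ ≤ _ := hmahler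
    -- raise both sides to the power Q'
    have hFab : 0 < a * F x + b * F y :=
      add_pos (mul_pos ha0 (hFpos x hx)) (mul_pos hb0 (hFpos y hy))
    have hraised := Real.rpow_le_rpow (Real.rpow_nonneg (hz k).le m) hzk hQ'pos.le
    have eL : (z k ^ m) ^ Q' = z k ^ p k := by
      rw [← Real.rpow_mul (hz k).le, hm_def, div_mul_cancel₀ _ hQ'pos.ne']
    have eR : ((a * F x + b * F y) ^ (1 / Q')
          * ∏ i ∈ Finset.univ.erase k, z i ^ (-p i / Q')) ^ Q'
        = (a * F x + b * F y) * ∏ i ∈ Finset.univ.erase k, z i ^ (-p i) := by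
      rw [Real.mul_rpow (Real.rpow_nonneg hFab.le _)
        (Finset.prod_nonneg fun i _ => (Real.rpow_pos_of_pos (hz i) _).le)]
      congr 1
      · rw [← Real.rpow_mul hFab.le, one_div_mul_cancel hQ'pos.ne', Real.rpow_one]
      · rw [← Real.finset_prod_rpow _ _ (fun i _ => (Real.rpow_pos_of_pos (hz i) _).le)]
        exact Finset.prod_congr rfl fun i _ => by
          rw [← Real.rpow_mul (hz i).le, div_mul_cancel₀ _ hQ'pos.ne']
    rw [eL, eR] at hraised
    -- conclude F z ≤ a * F x + b * F y
    have hPz : 0 < ∏ i ∈ Finset.univ.erase k, z i ^ p i :=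
      Finset.prod_pos fun i _ => Real.rpow_pos_of_pos (hz i) _
    have hcancel : (∏ i ∈ Finset.univ.erase k, z i ^ (-p i))
        * ∏ i ∈ Finset.univ.erase k, z i ^ p i = 1 := by
      rw [← Finset.prod_mul_distrib]
      refine Finset.prod_eq_one fun i _ => ?_
      rw [← Real.rpow_add (hz i), neg_add_cancel, Real.rpow_zero]
    have hkey : F z ≤ a * F x + b * F y := by
      have h1 : F z = z k ^ p k * ∏ i ∈ Finset.univ.erase k, z i ^ p i := by
        simp only [hF]
        rw [← Finset.mul_prod_erase Finset.univ _ (Finset.mem_univ k)]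
      have h2 := mul_le_mul_of_nonneg_right hraised hPz.le
      rw [mul_assoc, hcancel, mul_one] at h2
      rw [h1]; exact h2
    calc c * F z ≤ c * (a * F x + b * F y) := mul_le_mul_of_nonneg_left hkey hc.le
      _ = a * (c * F x) + b * (c * F y) := by ring
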